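/- arXiv:2603.07827 — 2 statements merged into one kernel-verified Lean document; each statement's English description precedes it below -/
import Mathlib

section
/- Let c ∈ ℂ ∖ {0} and Q₀ ∈ ℂ ∖ {0}, and let x ∈ ℂ(s) be the rational function x = c·s/((s − Q₀)(s − Q₀⁻¹)) (so x satisfies x^{ι₁} = x, has simple zeros at 0 and at infinity, and its poles lie in {Q₀, Q₀⁻¹}). Let h ∈ ℂ(s) satisfy h^{ι₁} = h and assume h has no pole at any point of ℂ ∖ {0}. Then there exists a polynomial P ∈ ℂ[X] such that h = P(1/x); in other words, h is a Laurent polynomial in x belonging to ℂ[1/x]. -/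
/-!
Statement 14: let x = c·s/((s − Q₀)(s − Q₀⁻¹)) ∈ ℂ(s). If h ∈ ℂ(s) is fixed by the
involution ι₁ : s ↦ 1/s and has no pole in ℂ ∖ {0}, then h is a polynomial in 1/x,
i.e. a Laurent polynomial in x lying in ℂ[1/x].
-/

noncomputable section

open Polynomial RatFunc

lemma only_zero_root (q : Polynomial ℂ) (hm : q.Monic)
    (h0 : ∀ a : ℂ, a ≠ 0 → q.eval a ≠ 0) : q = Polynomial.X ^ q.natDegree := by
  generalize hd : q.natDegree = d
  induction d using Nat.strong_induction_on generalizing q with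
  | _ d ih =>
    rcases Nat.eq_zero_or_pos d with h0d | hpos
    · subst h0d
      rw [pow_zero]
      exact (Polynomial.Monic.natDegree_eq_zero hm).mp hd
    · have hdeg : 0 < q.degree := by
        rw [Polynomial.degree_eq_natDegree hm.ne_zero, hd]; exact_mod_cast hpos
      obtain ⟨z, hz⟩ := Complex.exists_root hdeg
      have hz0 : z = 0 := by
        by_contra hzne
        exact h0 z hzne hz
      subst hz0
      have hXdvd : Polynomial.X ∣ q := Polynomial.X_dvd_iff.mpr
        (by rwa [Polynomial.coeff_zero_eq_eval_zero])
      obtain ⟨r, rfl⟩ := hXdvd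
      have hrm : r.Monic := by
        by_contra hr
        rcases eq_or_ne r 0 with rfl | hr0
        · simp [Polynomial.Monic] at hm
        · have := hm
          rw [Polynomial.Monic, Polynomial.leadingCoeff_mul, Polynomial.leadingCoeff_X,
            one_mul] at this
          exact hr this
      have hrd : r.natDegree = d - 1 := by
        have := hd
        rw [Polynomial.natDegree_mul Polynomial.X_ne_zero hrm.ne_zero,
          Polynomial.natDegree_X] at this
        omega
      have := ih (d - 1) (by omega) r hrm
        (fun a ha => by
          have := h0 a ha
          simp only [Polynomial.eval_mul, Polynomial.eval_X] at this
          exact fun hr => this (by rw [hr, mul_zero])) hrd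
      rw [this, ← pow_succ']
      congr 1
      omega

local notation "u" => (RatFunc.X + RatFunc.X⁻¹ : RatFunc ℂ)
local notation "A" => Algebra.adjoin ℂ {(RatFunc.X + RatFunc.X⁻¹ : RatFunc ℂ)}

lemma uXmem : (RatFunc.X + RatFunc.X⁻¹ : RatFunc ℂ) ∈ A :=
  Algebra.subset_adjoin rfl

lemma vmem : ∀ n : ℕ, (RatFunc.X ^ n + RatFunc.X⁻¹ ^ n : RatFunc ℂ) ∈ A := by
  have hX : (RatFunc.X : RatFunc ℂ) ≠ 0 := RatFunc.X_ne_zero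
  intro n
  induction n using Nat.strong_induction_on with
  | _ n ih =>
    match n with
    | 0 => simpa using Subalgebra.add_mem A (Subalgebra.one_mem A) (Subalgebra.one_mem A)
    | 1 => simpa using uXmem
    | (k+2) =>
      have hrec : (RatFunc.X ^ (k+2) + RatFunc.X⁻¹ ^ (k+2) : RatFunc ℂ)
          = u * (RatFunc.X ^ (k+1) + RatFunc.X⁻¹ ^ (k+1)) - (RatFunc.X ^ k + RatFunc.X⁻¹ ^ k) := by
        have hXX : (RatFunc.X : RatFunc ℂ) * RatFunc.X⁻¹ = 1 := mul_inv_cancel₀ hX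
        linear_combination (-(RatFunc.X⁻¹ ^ k + RatFunc.X ^ k : RatFunc ℂ)) * hXX
      rw [hrec]
      exact Subalgebra.sub_mem _ (Subalgebra.mul_mem _ uXmem (ih (k+1) (by omega)))
        (ih k (by omega))

lemma algebraMap_eq_aeval (p : Polynomial ℂ) :
    algebraMap (Polynomial ℂ) (RatFunc ℂ) p = Polynomial.aeval RatFunc.X p := by
  have : (IsScalarTower.toAlgHom ℂ (Polynomial ℂ) (RatFunc ℂ)) =
      (Polynomial.aeval (RatFunc.X : RatFunc ℂ)) := by
    apply Polynomial.algHom_ext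
    simp [RatFunc.algebraMap_X]
  exact congrFun (congrArg DFunLike.coe this) p

lemma iota_aeval (ι₁ : RatFunc ℂ ≃ₐ[ℂ] RatFunc ℂ)
    (hι₁ : ι₁ RatFunc.X = RatFunc.X⁻¹) (p : Polynomial ℂ) :
    ι₁ (Polynomial.aeval RatFunc.X p) = Polynomial.aeval (RatFunc.X⁻¹ : RatFunc ℂ) p := by
  rw [← hι₁]
  exact (Polynomial.aeval_algHom_apply ι₁.toAlgHom RatFunc.X p).symm

lemma base_const (p : Polynomial ℂ)
    (hp : Polynomial.aeval (RatFunc.X⁻¹ : RatFunc ℂ) p = Polynomial.aeval RatFunc.X p) :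
    p.natDegree = 0 := by
  by_contra hd
  have hp0 : p ≠ 0 := by rintro rfl; simp at hd
  letI : Invertible (RatFunc.X : RatFunc ℂ)⁻¹ :=
    invertibleOfNonzero (inv_ne_zero RatFunc.X_ne_zero)
  have hrev := Polynomial.eval₂_reverse_mul_pow (algebraMap ℂ (RatFunc ℂ))
    (RatFunc.X⁻¹ : RatFunc ℂ) p
  rw [invOf_eq_inv, inv_inv] at hrev
  have h1 : Polynomial.aeval (RatFunc.X : RatFunc ℂ) p.reverse *
      ((RatFunc.X : RatFunc ℂ)⁻¹) ^ p.natDegree = Polynomial.aeval RatFunc.X p := by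
    rw [← hp]
    simp only [Polynomial.aeval_def]
    exact hrev
  have h2 : Polynomial.aeval (RatFunc.X : RatFunc ℂ) p.reverse =
      Polynomial.aeval RatFunc.X (p * Polynomial.X ^ p.natDegree) := by
    have hXn : ((RatFunc.X : RatFunc ℂ)) ^ p.natDegree ≠ 0 :=
      pow_ne_zero _ RatFunc.X_ne_zero
    rw [inv_pow, mul_inv_eq_iff_eq_mul₀ hXn] at h1
    simpa [map_mul, map_pow, Polynomial.aeval_X] using h1
  have h3 : p.reverse = p * Polynomial.X ^ p.natDegree := by
    apply RatFunc.algebraMap_injective ℂ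
    rwa [algebraMap_eq_aeval, algebraMap_eq_aeval]
  have h4 := congrArg Polynomial.natDegree h3
  rw [Polynomial.natDegree_mul hp0 (pow_ne_zero _ Polynomial.X_ne_zero),
    Polynomial.natDegree_X_pow] at h4
  have := p.reverse_natDegree_le
  omega

lemma key (ι₁ : RatFunc ℂ ≃ₐ[ℂ] RatFunc ℂ)
    (hι₁ : ι₁ RatFunc.X = RatFunc.X⁻¹) (n : ℕ) :
    ∀ p : Polynomial ℂ,
      ι₁ (Polynomial.aeval RatFunc.X p / RatFunc.X ^ n)
        = Polynomial.aeval RatFunc.X p / RatFunc.X ^ n →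
      Polynomial.aeval RatFunc.X p / RatFunc.X ^ n ∈ A := by
  have hX : (RatFunc.X : RatFunc ℂ) ≠ 0 := RatFunc.X_ne_zero
  induction n with
  | zero =>
    intro p hs
    rw [pow_zero, div_one] at hs ⊢
    rw [iota_aeval ι₁ hι₁] at hs
    have hd := base_const p hs
    rw [Polynomial.eq_C_of_natDegree_eq_zero hd, Polynomial.aeval_C]
    exact Subalgebra.algebraMap_mem _ _
  | succ m ih =>
    intro p hs
    by_cases hp0 : p.eval 0 = 0
    · obtain ⟨q, rfl⟩ : Polynomial.X ∣ p :=
        Polynomial.X_dvd_iff.mpr (by rwa [Polynomial.coeff_zero_eq_eval_zero])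
      have hq : Polynomial.aeval (RatFunc.X : RatFunc ℂ) (Polynomial.X * q) /
          RatFunc.X ^ (m + 1) = Polynomial.aeval RatFunc.X q / RatFunc.X ^ m := by
        rw [map_mul, Polynomial.aeval_X, pow_succ']
        rw [mul_div_mul_left _ _ hX]
      rw [hq] at hs ⊢
      exact ih q hs
    · set a := p.eval 0 with ha
      set v : RatFunc ℂ := RatFunc.X ^ (m + 1) + RatFunc.X⁻¹ ^ (m + 1) with hv
      obtain ⟨q, hq⟩ : Polynomial.X ∣ (p - Polynomial.C a * (Polynomial.X ^ (2 * (m + 1)) + 1)) :=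
        Polynomial.X_dvd_iff.mpr (by
          simp [Polynomial.coeff_zero_eq_eval_zero, ha, Nat.mul_succ])
      have hdecomp : Polynomial.aeval (RatFunc.X : RatFunc ℂ) p / RatFunc.X ^ (m + 1)
          = Polynomial.aeval RatFunc.X q / RatFunc.X ^ m + algebraMap ℂ (RatFunc ℂ) a * v := by
        have h1 : Polynomial.aeval (RatFunc.X : RatFunc ℂ) p
            = RatFunc.X * Polynomial.aeval RatFunc.X q
              + algebraMap ℂ (RatFunc ℂ) a * (RatFunc.X ^ (2 * (m + 1)) + 1) := by
          have := congrArg (Polynomial.aeval (RatFunc.X : RatFunc ℂ)) hq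
          simp only [map_sub, map_mul, map_add, map_pow, map_one, Polynomial.aeval_X,
            Polynomial.aeval_C] at this
          linear_combination this
        rw [h1, hv]
        simp only [inv_pow]
        field_simp
        ring
      have hsq : ι₁ (Polynomial.aeval RatFunc.X q / RatFunc.X ^ m)
          = Polynomial.aeval RatFunc.X q / RatFunc.X ^ m := by
        have hιv : ι₁ v = v := by
          rw [hv]
          rw [map_add, map_pow, map_pow, hι₁, map_inv₀, hι₁, inv_inv, add_comm]
        have hιa : ι₁ (algebraMap ℂ (RatFunc ℂ) a) = algebraMap ℂ (RatFunc ℂ) a :=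
          ι₁.commutes a
        have := hs
        rw [hdecomp, map_add, map_mul, hιv, hιa] at this
        exact add_right_cancel this
      rw [hdecomp]
      exact Subalgebra.add_mem _ (ih q hsq)
        (Subalgebra.mul_mem _ (Subalgebra.algebraMap_mem _ _) (vmem (m + 1)))

/-- `a` is a pole of the rational function `h`. -/
def IsPole (h : RatFunc ℂ) (a : ℂ) : Prop := h.denom.eval a = 0

theorem statement14 (c Q₀ : ℂ) (hc : c ≠ 0) (hQ₀ : Q₀ ≠ 0)
    (ι₁ : RatFunc ℂ ≃ₐ[ℂ] RatFunc ℂ)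
    (hι₁ : ι₁ RatFunc.X = RatFunc.X⁻¹)
    (x : RatFunc ℂ)
    (hx : x = RatFunc.C c * RatFunc.X /
      ((RatFunc.X - RatFunc.C Q₀) * (RatFunc.X - RatFunc.C Q₀⁻¹)))
    (h : RatFunc ℂ) (hsym : ι₁ h = h)
    (hpole : ∀ a : ℂ, a ≠ 0 → ¬ IsPole h a) :
    ∃ P : Polynomial ℂ, h = Polynomial.aeval x⁻¹ P := by
  set n := h.denom.natDegree with hn
  have hden : h.denom = Polynomial.X ^ n :=
    only_zero_root h.denom (RatFunc.monic_denom h) (fun a ha => hpole a ha)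
  have hrep : h = Polynomial.aeval RatFunc.X h.num / RatFunc.X ^ n := by
    conv_lhs => rw [← RatFunc.num_div_denom h]
    rw [hden, map_pow, RatFunc.algebraMap_X, algebraMap_eq_aeval]
  have hmem : h ∈ A := by
    rw [hrep]
    exact key ι₁ hι₁ n h.num (by rw [← hrep]; exact hsym)
  -- u ∈ range of aeval x⁻¹
  have hCc : (RatFunc.C c : RatFunc ℂ) ≠ 0 := by
    rw [← RatFunc.algebraMap_C]
    exact RatFunc.algebraMap_ne_zero (Polynomial.C_ne_zero.mpr hc)
  have hCQ : (RatFunc.C Q₀ : RatFunc ℂ) ≠ 0 := by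
    rw [← RatFunc.algebraMap_C]
    exact RatFunc.algebraMap_ne_zero (Polynomial.C_ne_zero.mpr hQ₀)
  have hne1 : (RatFunc.X - RatFunc.C Q₀ : RatFunc ℂ) ≠ 0 := by
    rw [← RatFunc.algebraMap_X, ← RatFunc.algebraMap_C, ← map_sub]
    exact RatFunc.algebraMap_ne_zero (Polynomial.X_sub_C_ne_zero Q₀)
  have hne2 : (RatFunc.X - RatFunc.C Q₀⁻¹ : RatFunc ℂ) ≠ 0 := by
    rw [← RatFunc.algebraMap_X, ← RatFunc.algebraMap_C, ← map_sub]
    exact RatFunc.algebraMap_ne_zero (Polynomial.X_sub_C_ne_zero Q₀⁻¹)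
  have hQQ : (RatFunc.C Q₀ : RatFunc ℂ) * RatFunc.C Q₀⁻¹ = 1 := by
    rw [← map_mul, mul_inv_cancel₀ hQ₀, map_one]
  have hu : (RatFunc.X + RatFunc.X⁻¹ : RatFunc ℂ)
      = RatFunc.C c * x⁻¹ + RatFunc.C (Q₀ + Q₀⁻¹) := by
    have hCinv : (RatFunc.C Q₀⁻¹ : RatFunc ℂ) = (RatFunc.C Q₀)⁻¹ := map_inv₀ _ _
    rw [hx, inv_div, map_add, hCinv]
    rw [hCinv] at hne2
    have hX : (RatFunc.X : RatFunc ℂ) ≠ 0 := RatFunc.X_ne_zero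
    field_simp
    ring
  have humem : (RatFunc.X + RatFunc.X⁻¹ : RatFunc ℂ) ∈
      (Polynomial.aeval (R := ℂ) x⁻¹).range := by
    refine ⟨Polynomial.C c * Polynomial.X + Polynomial.C (Q₀ + Q₀⁻¹), ?_⟩
    show Polynomial.aeval x⁻¹ (Polynomial.C c * Polynomial.X + Polynomial.C (Q₀ + Q₀⁻¹))
      = RatFunc.X + RatFunc.X⁻¹
    rw [map_add, map_mul, Polynomial.aeval_C, Polynomial.aeval_X, Polynomial.aeval_C, hu]
    simp [RatFunc.algebraMap_C]
  have hle : A ≤ (Polynomial.aeval (R := ℂ) x⁻¹).range :=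
    Algebra.adjoin_le (Set.singleton_subset_iff.mpr humem)
  obtain ⟨P, hP⟩ := hle hmem
  exact ⟨P, hP.symm⟩
end
end

section
/- Let K be a field with an additive valuation v : K → WithTop ℚ, and let d_{1,-1}, d_{-1,1}, d_{1,0}, d_{0,1}, d_{1,1} ∈ K with v(d_{1,-1}) = v(d_{-1,1}) = 0 and v(d_{1,0}) ≥ 0, v(d_{0,1}) ≥ 0, v(d_{1,1}) ≥ 0. Let X, Y : ℕ → K ∖ {0} be sequences satisfying, for all k ≥ 0, Y(k+1) = (d_{-1,1}·X(k)² + d_{0,1}·X(k) + d_{1,1}) / (d_{1,-1}·Y(k)) and X(k+1) = (d_{1,-1}·Y(k+1)² + d_{1,0}·Y(k+1) + d_{1,1}) / (d_{-1,1}·X(k)) (these recurrences encode the action of σ = ι₂∘ι₁ on the coordinates). Suppose v(X(0)) = i and v(Y(0)) = j with i < j < 0 (as rationals), and set δ = j − i. Then for every k ≥ 0, v(X(k)) = i − 2δk and v(Y(k)) = j − 2δk. -/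
lemma aux16 {K : Type*} [Field K] (v : AddValuation K (WithTop ℚ))
    {a b d x : K} (ha : v a = 0) (hb : 0 ≤ v b) (hd : 0 ≤ v d)
    {c : ℚ} (hx : v x = (c : WithTop ℚ)) (hc : c < 0) :
    v (a * x ^ 2 + b * x + d) = ((2 * c : ℚ) : WithTop ℚ) := by
  have hsq : v (a * x ^ 2) = ((2 * c : ℚ) : WithTop ℚ) := by
    rw [v.map_mul, ha, sq, v.map_mul, hx, zero_add, ← WithTop.coe_add,
      WithTop.coe_eq_coe]
    ring
  have h2c : ((2 * c : ℚ) : WithTop ℚ) < (c : WithTop ℚ) := by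
    exact_mod_cast by linarith
  have h2c0 : ((2 * c : ℚ) : WithTop ℚ) < 0 := by
    exact_mod_cast by linarith
  have hbx : ((2 * c : ℚ) : WithTop ℚ) < v (b * x) := by
    rw [v.map_mul, hx]
    calc ((2 * c : ℚ) : WithTop ℚ) < (c : WithTop ℚ) := h2c
    _ = 0 + (c : WithTop ℚ) := by rw [zero_add]
    _ ≤ v b + (c : WithTop ℚ) := by exact add_le_add_left hb _
  have hrest : v (a * x ^ 2) < v (b * x + d) := by
    rw [hsq]
    exact lt_of_lt_of_le (lt_min hbx (lt_of_lt_of_le h2c0 hd)) (v.map_add _ _)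
  rw [add_assoc, v.map_add_eq_of_lt_left hrest, hsq]

theorem statement16 {K : Type*} [Field K] (v : AddValuation K (WithTop ℚ))
    (dpm dmp dpz dzp d11 : K)
    (hpm : v dpm = 0) (hmp : v dmp = 0)
    (hpz : 0 ≤ v dpz) (hzp : 0 ≤ v dzp) (h11 : 0 ≤ v d11)
    (X Y : ℕ → K) (hX : ∀ k, X k ≠ 0) (hY : ∀ k, Y k ≠ 0)
    (hrecY : ∀ k, Y (k + 1) = (dmp * X k ^ 2 + dzp * X k + d11) / (dpm * Y k))
    (hrecX : ∀ k, X (k + 1) = (dpm * Y (k + 1) ^ 2 + dpz * Y (k + 1) + d11) / (dmp * X k))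
    (i j : ℚ) (hvX : v (X 0) = (i : WithTop ℚ)) (hvY : v (Y 0) = (j : WithTop ℚ))
    (hij : i < j) (hj0 : j < 0) :
    ∀ k : ℕ, v (X k) = ((i - 2 * (j - i) * k : ℚ) : WithTop ℚ) ∧
      v (Y k) = ((j - 2 * (j - i) * k : ℚ) : WithTop ℚ) := by
  intro k
  induction k with
  | zero => simpa using ⟨hvX, hvY⟩
  | succ k ih =>
    obtain ⟨ihX, ihY⟩ := ih
    have hk0 : (0 : ℚ) ≤ k := Nat.cast_nonneg k
    have hd : (0 : ℚ) < j - i := by linarith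
    have hxneg : i - 2 * (j - i) * k < 0 := by nlinarith
    -- value of Y (k+1)
    have hnum := aux16 v hmp hzp h11 ihX hxneg
    have hYk1 : v (Y (k + 1)) = ((2 * (i - 2 * (j - i) * k) - (j - 2 * (j - i) * k) : ℚ) : WithTop ℚ) := by
      rw [hrecY k, v.map_div, hnum, v.map_mul, hpm, ihY, zero_add]
      push_cast
      ring
    have hYval : (2 * (i - 2 * (j - i) * k) - (j - 2 * (j - i) * k) : ℚ) = j - 2 * (j - i) * (k + 1) := by
      ring
    rw [hYval] at hYk1
    have hyneg : j - 2 * (j - i) * ((k : ℚ) + 1) < 0 := by nlinarith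
    have hnum2 := aux16 v hpm hpz h11 hYk1 hyneg
    have hXk1 : v (X (k + 1)) = ((2 * (j - 2 * (j - i) * (k + 1)) - (i - 2 * (j - i) * k) : ℚ) : WithTop ℚ) := by
      rw [hrecX k, v.map_div, hnum2, v.map_mul, hmp, ihX, zero_add]
      push_cast
      ring
    have hXval : (2 * (j - 2 * (j - i) * ((k:ℚ) + 1)) - (i - 2 * (j - i) * k) : ℚ) = i - 2 * (j - i) * (k + 1) := by
      ring
    rw [hXval] at hXk1
    constructor
    · rw [hXk1]; push_cast; ring_nf
    · rw [hYk1]; push_cast; ring_nf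
end
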